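/- If {X_i : i ∈ T} and {Y_j : j ∈ U} are each negatively associated families, and the joint vector (X_i)_{i∈T} is independent of the joint vector (Y_j)_{j∈U}, then the combined family {X_i} ∪ {Y_j} is negatively associated. -/

import Mathlib

open Finset

/-- Expectation on a finite probability space with weight function `p`. -/
def expect {Ω : Type*} [Fintype Ω] (p : Ω → ℝ) (f : Ω → ℝ) : ℝ :=
  ∑ ω, p ω * f ω

/-- `f` depends only on the coordinates in `I`. -/
def DependsOnCoords {ι : Type*} (f : (ι → ℝ) → ℝ) (I : Finset ι) : Prop :=
  ∀ x y : ι → ℝ, (∀ i ∈ I, x i = y i) → f x = f y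

/-- `f` is monotone non-decreasing in the coordinatewise order. -/
def MonoFn {ι : Type*} (f : (ι → ℝ) → ℝ) : Prop :=
  ∀ x y : ι → ℝ, (∀ i, x i ≤ y i) → f x ≤ f y

/-- `f` is bounded. -/
def BddFn {ι : Type*} (f : (ι → ℝ) → ℝ) : Prop :=
  ∃ C, ∀ x, |f x| ≤ C

/-- The family `{X_i : i ∈ T}` is negatively associated under `p`:
for all disjoint `I, J ⊆ T` and all pairs of bounded monotone non-decreasing
functions `f` (depending only on `I`) and `g` (depending only on `J`),
`E[f·g] ≤ E[f]·E[g]`. -/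
def NegAssoc {Ω ι : Type*} [Fintype Ω] (p : Ω → ℝ) (T : Finset ι)
    (X : ι → Ω → ℝ) : Prop :=
  ∀ I J : Finset ι, I ⊆ T → J ⊆ T → Disjoint I J →
    ∀ f g : (ι → ℝ) → ℝ, DependsOnCoords f I → DependsOnCoords g J →
      MonoFn f → MonoFn g → BddFn f → BddFn g →
        expect p (fun ω => f (fun i => X i ω) * g (fun i => X i ω)) ≤
          expect p (fun ω => f (fun i => X i ω)) *
            expect p (fun ω => g (fun i => X i ω))

/-- If two negatively associated families are independent of each other
(as joint vectors), then their union is negatively associated. -/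
theorem negAssoc_union_of_indep {Ω ι κ : Type*} [Fintype Ω] (p : Ω → ℝ)
    (hp : ∀ ω, 0 ≤ p ω) (hsum : ∑ ω, p ω = 1)
    (X : ι → Ω → ℝ) (Y : κ → Ω → ℝ) (T : Finset ι) (U : Finset κ)
    (hX : NegAssoc p T X) (hY : NegAssoc p U Y)
    (hindep : ∀ (F : (ι → ℝ) → ℝ) (G : (κ → ℝ) → ℝ),
      expect p (fun ω => F (fun i => X i ω) * G (fun j => Y j ω)) =
        expect p (fun ω => F (fun i => X i ω)) *
          expect p (fun ω => G (fun j => Y j ω))) :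
    NegAssoc p (T.disjSum U) (Sum.elim X Y) := by
  classical
  intro I J hIT hJT hIJ f g hfI hgJ hfm hgm hfb hgb
  have hz : ∀ ω : Ω, (fun s => Sum.elim X Y s ω) =
      Sum.elim (fun i => X i ω) (fun j => Y j ω) :=
    fun ω => funext fun s => by cases s <;> rfl
  simp only [hz]
  obtain ⟨C, hC⟩ := hfb
  obtain ⟨D, hD⟩ := hgb
  -- constant expectation
  have expconst : ∀ c : ℝ, _root_.expect p (fun _ => c) = c := by
    intro c; unfold _root_.expect; rw [← Finset.sum_mul, hsum, one_mul]
  -- the set of values of the Y-vector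
  set V : Finset (κ → ℝ) := Finset.univ.image (fun ω => fun j => Y j ω) with hV
  -- the probability weight of each value
  set q : (κ → ℝ) → ℝ :=
    fun v => _root_.expect p (fun ω => if (fun j => Y j ω) = v then (1:ℝ) else 0) with hqdef
  have hq0 : ∀ v, 0 ≤ q v := by
    intro v
    refine Finset.sum_nonneg fun ω _ => mul_nonneg (hp ω) ?_
    dsimp only
    split <;> norm_num
  -- key conditioning identity
  have key : ∀ H : (ι → ℝ) → (κ → ℝ) → ℝ,
      _root_.expect p (fun ω => H (fun i => X i ω) (fun j => Y j ω)) =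
        ∑ v ∈ V, q v * _root_.expect p (fun ω => H (fun i => X i ω) v) := by
    intro H
    have step : ∀ ω : Ω, H (fun i => X i ω) (fun j => Y j ω) =
        ∑ v ∈ V, (if (fun j => Y j ω) = v then (1:ℝ) else 0) * H (fun i => X i ω) v := by
      intro ω
      symm
      simp only [ite_mul, one_mul, zero_mul]
      rw [Finset.sum_ite_eq]
      simp [hV]
    calc _root_.expect p (fun ω => H (fun i => X i ω) (fun j => Y j ω))
        = ∑ ω, ∑ v ∈ V, p ω *
            ((if (fun j => Y j ω) = v then (1:ℝ) else 0) * H (fun i => X i ω) v) := by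
          unfold _root_.expect
          exact Finset.sum_congr rfl fun ω _ => by dsimp only; rw [step ω, Finset.mul_sum]
      _ = ∑ v ∈ V, ∑ ω, p ω *
            ((if (fun j => Y j ω) = v then (1:ℝ) else 0) * H (fun i => X i ω) v) :=
          Finset.sum_comm
      _ = ∑ v ∈ V, q v * _root_.expect p (fun ω => H (fun i => X i ω) v) := by
          refine Finset.sum_congr rfl fun v _ => ?_
          have h := hindep (fun u => H u v) (fun w => if w = v then (1:ℝ) else 0)
          calc ∑ ω, p ω * ((if (fun j => Y j ω) = v then (1:ℝ) else 0) * H (fun i => X i ω) v)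
              = _root_.expect p (fun ω => H (fun i => X i ω) v *
                  (if (fun j => Y j ω) = v then (1:ℝ) else 0)) := by
                unfold _root_.expect; exact Finset.sum_congr rfl fun ω _ => by ring
            _ = _ := by rw [h]; ring
  -- subset and disjointness facts
  have hITL : I.toLeft ⊆ T := fun i hi =>
    (Finset.inl_mem_disjSum).mp (hIT (Finset.mem_toLeft.mp hi))
  have hJTL : J.toLeft ⊆ T := fun i hi =>
    (Finset.inl_mem_disjSum).mp (hJT (Finset.mem_toLeft.mp hi))
  have hIUR : I.toRight ⊆ U := fun j hj =>
    (Finset.inr_mem_disjSum).mp (hIT (Finset.mem_toRight.mp hj))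
  have hJUR : J.toRight ⊆ U := fun j hj =>
    (Finset.inr_mem_disjSum).mp (hJT (Finset.mem_toRight.mp hj))
  have hdisj' := Finset.disjoint_left.mp hIJ
  have hdisjL : Disjoint I.toLeft J.toLeft := Finset.disjoint_left.mpr fun a ha hb =>
    hdisj' (Finset.mem_toLeft.mp ha) (Finset.mem_toLeft.mp hb)
  have hdisjR : Disjoint I.toRight J.toRight := Finset.disjoint_left.mpr fun a ha hb =>
    hdisj' (Finset.mem_toRight.mp ha) (Finset.mem_toRight.mp hb)
  -- conditional expectations
  set Φ : (κ → ℝ) → ℝ :=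
    fun v => _root_.expect p (fun ω => f (Sum.elim (fun i => X i ω) v)) with hΦdef
  set Ψ : (κ → ℝ) → ℝ :=
    fun v => _root_.expect p (fun ω => g (Sum.elim (fun i => X i ω) v)) with hΨdef
  -- step A: for each fixed v, apply NA of X
  have stepA : ∀ v : κ → ℝ,
      _root_.expect p (fun ω => f (Sum.elim (fun i => X i ω) v) *
          g (Sum.elim (fun i => X i ω) v)) ≤ Φ v * Ψ v := by
    intro v
    refine hX I.toLeft J.toLeft hITL hJTL hdisjL
      (fun u => f (Sum.elim u v)) (fun u => g (Sum.elim u v))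
      ?_ ?_ ?_ ?_ ⟨C, fun u => hC _⟩ ⟨D, fun u => hD _⟩
    · intro x y h
      refine hfI _ _ fun s hs => ?_
      cases s with
      | inl i => exact h i (Finset.mem_toLeft.mpr hs)
      | inr j => rfl
    · intro x y h
      refine hgJ _ _ fun s hs => ?_
      cases s with
      | inl i => exact h i (Finset.mem_toLeft.mpr hs)
      | inr j => rfl
    · intro x y h
      refine hfm _ _ fun s => ?_
      cases s with
      | inl i => exact h i
      | inr j => exact le_refl _
    · intro x y h
      refine hgm _ _ fun s => ?_
      cases s with
      | inl i => exact h i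
      | inr j => exact le_refl _
  -- properties of Φ, Ψ
  have hΦdep : DependsOnCoords Φ I.toRight := by
    intro x y h
    refine Finset.sum_congr rfl fun ω _ => ?_
    congr 1
    refine hfI _ _ fun s hs => ?_
    cases s with
    | inl i => rfl
    | inr j => exact h j (Finset.mem_toRight.mpr hs)
  have hΨdep : DependsOnCoords Ψ J.toRight := by
    intro x y h
    refine Finset.sum_congr rfl fun ω _ => ?_
    congr 1
    refine hgJ _ _ fun s hs => ?_
    cases s with
    | inl i => rfl
    | inr j => exact h j (Finset.mem_toRight.mpr hs)
  have hΦmono : MonoFn Φ := by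
    intro x y h
    refine Finset.sum_le_sum fun ω _ => mul_le_mul_of_nonneg_left ?_ (hp ω)
    refine hfm _ _ fun s => ?_
    cases s with
    | inl i => exact le_refl _
    | inr j => exact h j
  have hΨmono : MonoFn Ψ := by
    intro x y h
    refine Finset.sum_le_sum fun ω _ => mul_le_mul_of_nonneg_left ?_ (hp ω)
    refine hgm _ _ fun s => ?_
    cases s with
    | inl i => exact le_refl _
    | inr j => exact h j
  have bddaux : ∀ (h : Ω → ℝ) (E : ℝ), (∀ ω, |h ω| ≤ E) → |expect p h| ≤ E := by
    intro h E hE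
    calc |∑ ω, p ω * h ω| ≤ ∑ ω, |p ω * h ω| := Finset.abs_sum_le_sum_abs _ _
      _ ≤ ∑ ω, p ω * E := by
          refine Finset.sum_le_sum fun ω _ => ?_
          rw [abs_mul, abs_of_nonneg (hp ω)]
          exact mul_le_mul_of_nonneg_left (hE ω) (hp ω)
      _ = E := by rw [← Finset.sum_mul, hsum, one_mul]
  have hΦbdd : BddFn Φ := ⟨C, fun v => bddaux _ C fun ω => hC _⟩
  have hΨbdd : BddFn Ψ := ⟨D, fun v => bddaux _ D fun ω => hD _⟩
  -- step B: apply NA of Y to Φ, Ψ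
  have stepB :
      _root_.expect p (fun ω => Φ (fun j => Y j ω) * Ψ (fun j => Y j ω)) ≤
        _root_.expect p (fun ω => Φ (fun j => Y j ω)) *
          _root_.expect p (fun ω => Ψ (fun j => Y j ω)) :=
    hY I.toRight J.toRight hIUR hJUR hdisjR Φ Ψ hΦdep hΨdep hΦmono hΨmono hΦbdd hΨbdd
  -- identities relating marginals
  have hEf : _root_.expect p (fun ω => f (Sum.elim (fun i => X i ω) (fun j => Y j ω))) =
      _root_.expect p (fun ω => Φ (fun j => Y j ω)) := by
    rw [key (fun u v => f (Sum.elim u v)), key (fun _ v => Φ v)]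
    refine Finset.sum_congr rfl fun v _ => ?_
    rw [expconst]
  have hEg : _root_.expect p (fun ω => g (Sum.elim (fun i => X i ω) (fun j => Y j ω))) =
      _root_.expect p (fun ω => Ψ (fun j => Y j ω)) := by
    rw [key (fun u v => g (Sum.elim u v)), key (fun _ v => Ψ v)]
    refine Finset.sum_congr rfl fun v _ => ?_
    rw [expconst]
  calc _root_.expect p (fun ω => f (Sum.elim (fun i => X i ω) (fun j => Y j ω)) *
          g (Sum.elim (fun i => X i ω) (fun j => Y j ω)))
      = ∑ v ∈ V, q v * _root_.expect p (fun ω => f (Sum.elim (fun i => X i ω) v) *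
          g (Sum.elim (fun i => X i ω) v)) :=
        key (fun u v => f (Sum.elim u v) * g (Sum.elim u v))
    _ ≤ ∑ v ∈ V, q v * (Φ v * Ψ v) :=
        Finset.sum_le_sum fun v _ => mul_le_mul_of_nonneg_left (stepA v) (hq0 v)
    _ = _root_.expect p (fun ω => Φ (fun j => Y j ω) * Ψ (fun j => Y j ω)) := by
        rw [key (fun _ v => Φ v * Ψ v)]
        exact Finset.sum_congr rfl fun v _ => by rw [expconst]
    _ ≤ _root_.expect p (fun ω => Φ (fun j => Y j ω)) *
          _root_.expect p (fun ω => Ψ (fun j => Y j ω)) := stepB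
    _ = _ := by rw [← hEf, ← hEg]
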